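/- Let θ₀, θ_R, θ₀', θ_R', θ₀'', θ_R'' ∈ S_{2π} and z ∈ ℂ \ (σ(H_{θ₀,θ_R}) ∪ σ(H_{θ₀',θ_R'})). Then the boundary data maps compose: Λ_{θ₀',θ_R'}^{θ₀'',θ_R''}(z) · Λ_{θ₀,θ_R}^{θ₀',θ_R'}(z) = Λ_{θ₀,θ_R}^{θ₀'',θ_R''}(z). -/

import Mathlib

open MeasureTheory Set Complex Filter Matrix
open scoped Classical

noncomputable section

/-- The strip `S_{2π} = {z ∈ ℂ | 0 ≤ Re z < 2π}`. -/
def S2pi : Set ℂ := {z : ℂ | 0 ≤ z.re ∧ z.re < 2 * Real.pi}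

/-- `u` (with derivative `u'`) solves the inhomogeneous Schrödinger equation
`-u'' + V u - z u = f` on `[0,R]`: `u` is differentiable with derivative `u'`
on `[0,R]`, and `u'` is absolutely continuous with `u'' = (V - z) u - f` (a.e.),
encoded in integrated form. -/
def IsSolInhom (R : ℝ) (V : ℝ → ℂ) (z : ℂ) (f u u' : ℝ → ℂ) : Prop :=
  (∀ x ∈ Icc (0:ℝ) R, HasDerivAt u (u' x) x) ∧
  (∀ x ∈ Icc (0:ℝ) R, u' x = u' 0 + ∫ t in (0:ℝ)..x, ((V t - z) * u t - f t))

/-- `u` (with derivative `u'`) solves the homogeneous equation `-u'' + V u = z u`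
on `[0,R]`. -/
def IsSol (R : ℝ) (V : ℝ → ℂ) (z : ℂ) (u u' : ℝ → ℂ) : Prop :=
  IsSolInhom R V z 0 u u'

/-- The boundary trace map `γ_{θ₀,θ_R}(u) ∈ ℂ²`. -/
def bTrace (R : ℝ) (θ0 θR : ℂ) (u u' : ℝ → ℂ) : Fin 2 → ℂ :=
  ![Complex.cos θ0 * u 0 + Complex.sin θ0 * u' 0,
    Complex.cos θR * u R - Complex.sin θR * u' R]

/-- `z` is an eigenvalue of the Schrödinger operator `H_{θ₀,θ_R}` in `L²((0,R))`.
Since `H_{θ₀,θ_R}` has purely discrete spectrum, the spectrum `σ(H_{θ₀,θ_R})`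
coincides with the set of its eigenvalues. -/
def IsEigenvalue (R : ℝ) (V : ℝ → ℂ) (θ0 θR z : ℂ) : Prop :=
  ∃ u u' : ℝ → ℂ, IsSol R V z u u' ∧ bTrace R θ0 θR u u' = 0 ∧
    ∃ x ∈ Icc (0:ℝ) R, u x ≠ 0

/-- The boundary data map `Λ_{θ₀,θ_R}^{θ₀',θ_R'}(z) : ℂ² → ℂ²`: it sends the
`(θ₀,θ_R)`-boundary data of a solution of `-u'' + V u = z u` to its
`(θ₀',θ_R')`-boundary data.  (It is defined via a choice of solution; for
`z ∉ σ(H_{θ₀,θ_R})` the solution exists and is unique, so the map is well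
defined there.) -/
def lambdaMap (R : ℝ) (V : ℝ → ℂ) (θ0 θR θ0' θR' z : ℂ) (c : Fin 2 → ℂ) :
    Fin 2 → ℂ :=
  if h : ∃ u : (ℝ → ℂ) × (ℝ → ℂ), IsSol R V z u.1 u.2 ∧ bTrace R θ0 θR u.1 u.2 = c then
    bTrace R θ0' θR' h.choose.1 h.choose.2
  else 0

/-- The boundary data map `Λ_{θ₀,θ_R}^{θ₀',θ_R'}(z)` as a `2 × 2` complex matrix. -/
def lambdaMat (R : ℝ) (V : ℝ → ℂ) (θ0 θR θ0' θR' z : ℂ) :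
    Matrix (Fin 2) (Fin 2) ℂ :=
  Matrix.of fun i j => lambdaMap R V θ0 θR θ0' θR' z (Pi.single j 1) i

/-- The diagonal matrix `S_{α,β} = diag(sin α, sin β)`. -/
def Smat (α β : ℂ) : Matrix (Fin 2) (Fin 2) ℂ :=
  Matrix.diagonal ![Complex.sin α, Complex.sin β]

end



section AuxA
open intervalIntegral Topology

lemma volterra_hasDerivWithinAt {g : ℝ → ℂ} {c d x : ℝ} (hcd : c ≤ d)
    (hg : IntervalIntegrable g volume c d) (hx : x ∈ Icc c d) :
    HasDerivWithinAt (fun y => ∫ t in c..y, ((y - t : ℝ) : ℂ) * g t)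
      (∫ t in c..x, g t) (Icc c d) x := by
  have hmem : ∀ {e : ℝ}, e ∈ Icc c d → e ∈ uIcc c d := by
    intro e he; rwa [uIcc_of_le hcd]
  have hsub : ∀ {e f : ℝ}, e ∈ Icc c d → f ∈ Icc c d → IntervalIntegrable g volume e f :=
    fun he hf => hg.mono_set (uIcc_subset_uIcc (hmem he) (hmem hf))
  have hker : ∀ (y : ℝ) {e f : ℝ}, e ∈ Icc c d → f ∈ Icc c d →
      IntervalIntegrable (fun t => ((y - t : ℝ) : ℂ) * g t) volume e f := by
    intro y e f he hf
    exact (hsub he hf).continuousOn_mul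
      (Continuous.continuousOn (by continuity))
  have hcc : c ∈ Icc c d := left_mem_Icc.2 hcd
  -- key algebraic identity
  have key : ∀ y ∈ Icc c d,
      (∫ t in c..y, ((y - t : ℝ) : ℂ) * g t) - (∫ t in c..x, ((x - t : ℝ) : ℂ) * g t)
        - ((y - x : ℝ) : ℂ) * ∫ t in c..x, g t
      = ∫ t in x..y, ((y - t : ℝ) : ℂ) * g t := by
    intro y hy
    have h1 : (∫ t in c..y, ((y - t : ℝ) : ℂ) * g t)
        = (∫ t in c..x, ((y - t : ℝ) : ℂ) * g t) + ∫ t in x..y, ((y - t : ℝ) : ℂ) * g t :=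
      (integral_add_adjacent_intervals (hker y hcc hx) (hker y hx hy)).symm
    have h2 : (∫ t in c..x, ((y - t : ℝ) : ℂ) * g t)
        = (∫ t in c..x, ((x - t : ℝ) : ℂ) * g t) + ((y - x : ℝ) : ℂ) * ∫ t in c..x, g t := by
      rw [← intervalIntegral.integral_const_mul,
        ← intervalIntegral.integral_add (hker x hcc hx) ((hsub hcc hx).const_mul _)]
      apply intervalIntegral.integral_congr
      intro t ht
      push_cast
      ring
    rw [h1, h2]; ring
  rw [hasDerivWithinAt_iff_isLittleO]
  rw [Asymptotics.isLittleO_iff]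
  intro ε hε
  have hcont : ContinuousWithinAt (fun y => |∫ t in x..y, ‖g t‖|) (Icc c d) x := by
    have h1 : ContinuousOn (fun y => ∫ t in x..y, ‖g t‖) (uIcc c d) :=
      intervalIntegral.continuousOn_primitive_interval' hg.norm (hmem hx)
    have h2 : ContinuousWithinAt (fun y => ∫ t in x..y, ‖g t‖) (Icc c d) x := by
      rw [← uIcc_of_le hcd]; exact h1 x (hmem hx)
    exact h2.abs
  have hzero : |∫ t in x..x, ‖g t‖| = 0 := by simp
  have hev : ∀ᶠ y in 𝓝[Icc c d] x, |∫ t in x..y, ‖g t‖| < ε := by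
    have := hcont.tendsto
    rw [hzero] at this
    exact this.eventually (gt_mem_nhds hε)
  filter_upwards [hev, eventually_mem_nhdsWithin] with y hy hymem
  have hb : ‖∫ t in x..y, ((y - t : ℝ) : ℂ) * g t‖ ≤ |y - x| * |∫ t in x..y, ‖g t‖| := by
    have hbd : ∀ᵐ t ∂(volume.restrict (uIoc x y)), ‖((y - t : ℝ) : ℂ) * g t‖ ≤ |y - x| * ‖g t‖ := by
      refine (ae_restrict_iff' measurableSet_uIoc).2 (Eventually.of_forall ?_)
      intro t ht
      rw [norm_mul, Complex.norm_real, Real.norm_eq_abs]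
      have h1 : |y - t| ≤ |y - x| := by
        rcases le_total x y with h | h
        · rw [uIoc_of_le h] at ht
          rw [_root_.abs_of_nonneg (by linarith [ht.2] : (0:ℝ) ≤ y - t),
            _root_.abs_of_nonneg (by linarith : (0:ℝ) ≤ y - x)]
          linarith [ht.1]
        · rw [uIoc_of_ge h] at ht
          rw [_root_.abs_of_nonpos (by linarith [ht.1] : y - t ≤ 0),
            _root_.abs_of_nonpos (by linarith : y - x ≤ 0)]
          linarith [ht.2]
      exact mul_le_mul_of_nonneg_right h1 (norm_nonneg _)
    calc ‖∫ t in x..y, ((y - t : ℝ) : ℂ) * g t‖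
        ≤ |∫ t in x..y, |y - x| * ‖g t‖| :=
          intervalIntegral.norm_integral_le_abs_of_norm_le hbd ((hg.norm.mono_set
            (uIcc_subset_uIcc (hmem hx) (hmem hymem))).const_mul _)
      _ = |y - x| * |∫ t in x..y, ‖g t‖| := by
          rw [intervalIntegral.integral_const_mul, abs_mul, _root_.abs_abs]
  have : ‖(∫ t in c..y, ((y - t : ℝ) : ℂ) * g t) - (∫ t in c..x, ((x - t : ℝ) : ℂ) * g t)
      - (y - x) • (∫ t in c..x, g t)‖ ≤ ε * ‖y - x‖ := by
    rw [Complex.real_smul]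
    rw [key y hymem]
    calc ‖∫ t in x..y, ((y - t : ℝ) : ℂ) * g t‖ ≤ |y - x| * |∫ t in x..y, ‖g t‖| := hb
      _ ≤ |y - x| * ε := by
          exact mul_le_mul_of_nonneg_left hy.le (abs_nonneg _)
      _ = ε * ‖y - x‖ := by rw [Real.norm_eq_abs]; ring
  exact this


lemma affine_hasDerivAt (p s : ℂ) (e x : ℝ) :
    HasDerivAt (fun y : ℝ => p + ((y - e : ℝ) : ℂ) * s) s x := by
  have h2 : HasDerivAt (fun y : ℝ => ((y - e : ℝ) : ℂ)) 1 x := by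
    simpa using ((hasDerivAt_id x).sub_const e).ofReal_comp
  simpa using (h2.mul_const s).const_add p

lemma local_solve {q : ℝ → ℂ} {c d : ℝ} (hcd : c ≤ d)
    (hq : IntervalIntegrable q volume c d)
    (hsmall : (d - c) * ∫ t in c..d, ‖q t‖ ≤ 1/2)
    (a b : ℂ) :
    ∃ v v' : ℝ → ℂ, v c = a ∧ v' c = b ∧ (∀ x, HasDerivAt v (v' x) x) ∧
      ∀ x ∈ Icc c d, v' x = b + ∫ t in c..x, q t * v t := by
  rcases eq_or_lt_of_le hcd with rfl | hlt
  · refine ⟨fun x => a + ((x - c : ℝ) : ℂ) * b, fun _ => b, by simp, rfl,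
      fun x => affine_hasDerivAt a b c x, ?_⟩
    intro x hx
    have : x = c := le_antisymm hx.2 hx.1
    subst this
    simp
  -- now c < d
  have hmem : ∀ {e : ℝ}, e ∈ Icc c d → e ∈ uIcc c d := by
    intro e he; rwa [uIcc_of_le hcd]
  have hcc : c ∈ Icc c d := left_mem_Icc.2 hcd
  have hdd : d ∈ Icc c d := right_mem_Icc.2 hcd
  haveI : Nonempty (Icc c d) := ⟨⟨c, hcc⟩⟩
  let ext : C(Icc c d, ℂ) → ℝ → ℂ := fun w t => w (projIcc c d hcd t)
  have hext_cont : ∀ w, Continuous (ext w) := fun w => w.continuous.comp continuous_projIcc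
  have hext_int : ∀ (w : C(Icc c d, ℂ)) {e f : ℝ}, e ∈ Icc c d → f ∈ Icc c d →
      IntervalIntegrable (fun t => q t * ext w t) volume e f := by
    intro w e f he hf
    exact (hq.mono_set (uIcc_subset_uIcc (hmem he) (hmem hf))).mul_continuousOn
      (hext_cont w).continuousOn
  let Tfun : C(Icc c d, ℂ) → ℝ → ℂ := fun w x =>
    a + ((x - c : ℝ) : ℂ) * b + ∫ t in c..x, ((x - t : ℝ) : ℂ) * (q t * ext w t)
  have Tderiv : ∀ w, ∀ x ∈ Icc c d, HasDerivWithinAt (Tfun w)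
      (b + ∫ t in c..x, q t * ext w t) (Icc c d) x := by
    intro w x hx
    have h1 : HasDerivWithinAt (fun y : ℝ => a + ((y - c : ℝ) : ℂ) * b) b (Icc c d) x :=
      (affine_hasDerivAt a b c x).hasDerivWithinAt
    exact h1.add (volterra_hasDerivWithinAt hcd (hext_int w hcc hdd) hx)
  have Tcont : ∀ w, ContinuousOn (Tfun w) (Icc c d) :=
    fun w x hx => (Tderiv w x hx).continuousWithinAt
  let T : C(Icc c d, ℂ) → C(Icc c d, ℂ) := fun w =>
    ⟨fun x => Tfun w x, (Tcont w).restrict⟩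
  have hlip : ∀ w₁ w₂ : C(Icc c d, ℂ), dist (T w₁) (T w₂) ≤ (1/2) * dist w₁ w₂ := by
    intro w₁ w₂
    rw [ContinuousMap.dist_le (by positivity)]
    rintro ⟨x, hx⟩
    have e1 : ∀ w : C(Icc c d, ℂ), IntervalIntegrable
        (fun t => ((x - t : ℝ) : ℂ) * (q t * ext w t)) volume c x := fun w =>
      (hext_int w hcc hx).continuousOn_mul (Continuous.continuousOn (by continuity))
    have key : Tfun w₁ x - Tfun w₂ x
        = ∫ t in c..x, ((x - t : ℝ) : ℂ) * (q t * (ext w₁ t - ext w₂ t)) := by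
      have heqf : (fun t => ((x - t : ℝ) : ℂ) * (q t * (ext w₁ t - ext w₂ t)))
          = fun t => ((x - t : ℝ) : ℂ) * (q t * ext w₁ t)
              - ((x - t : ℝ) : ℂ) * (q t * ext w₂ t) := by
        funext t; ring
      rw [heqf, intervalIntegral.integral_sub (e1 w₁) (e1 w₂)]
      simp only [Tfun]
      ring
    have hint_nonneg : (0:ℝ) ≤ ∫ t in c..x, ‖q t‖ :=
      intervalIntegral.integral_nonneg hx.1 (fun t _ => norm_nonneg _)
    have hmono : (∫ t in c..x, ‖q t‖) ≤ ∫ t in c..d, ‖q t‖ := by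
      have i1 : IntervalIntegrable (fun t => ‖q t‖) volume c x :=
        hq.norm.mono_set (uIcc_subset_uIcc (hmem hcc) (hmem hx))
      have i2 : IntervalIntegrable (fun t => ‖q t‖) volume x d :=
        hq.norm.mono_set (uIcc_subset_uIcc (hmem hx) (hmem hdd))
      have hadd := intervalIntegral.integral_add_adjacent_intervals i1 i2
      have h2 : (0:ℝ) ≤ ∫ t in x..d, ‖q t‖ :=
        intervalIntegral.integral_nonneg hx.2 (fun t _ => norm_nonneg _)
      linarith [hadd]
    have hb : ‖Tfun w₁ x - Tfun w₂ x‖ ≤ (1/2) * dist w₁ w₂ := by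
      rw [key]
      have hbd : ∀ᵐ t ∂(volume.restrict (uIoc c x)),
          ‖((x - t : ℝ) : ℂ) * (q t * (ext w₁ t - ext w₂ t))‖
            ≤ ((d - c) * dist w₁ w₂) * ‖q t‖ := by
        refine (ae_restrict_iff' measurableSet_uIoc).2 (Eventually.of_forall ?_)
        intro t ht
        rw [uIoc_of_le hx.1] at ht
        rw [norm_mul, norm_mul, Complex.norm_real, Real.norm_eq_abs]
        have h1 : |x - t| ≤ d - c := by
          rw [_root_.abs_of_nonneg (by linarith [ht.2] : (0:ℝ) ≤ x - t)]
          have := hx.2; have := ht.1; have := hx.1; linarith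
        have h2 : ‖ext w₁ t - ext w₂ t‖ ≤ dist w₁ w₂ := by
          rw [← dist_eq_norm]
          exact ContinuousMap.dist_apply_le_dist _
        calc |x - t| * (‖q t‖ * ‖ext w₁ t - ext w₂ t‖)
            ≤ (d - c) * (‖q t‖ * dist w₁ w₂) :=
              mul_le_mul h1 (mul_le_mul_of_nonneg_left h2 (norm_nonneg _))
                (by positivity) (by linarith [hcd])
          _ = ((d - c) * dist w₁ w₂) * ‖q t‖ := by ring
      have habs : |∫ t in c..x, ((d - c) * dist w₁ w₂) * ‖q t‖|
          = ((d - c) * dist w₁ w₂) * ∫ t in c..x, ‖q t‖ := by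
        rw [intervalIntegral.integral_const_mul]
        exact _root_.abs_of_nonneg
          (mul_nonneg (mul_nonneg (by linarith [hcd]) dist_nonneg) hint_nonneg)
      have h3 : (d - c) * (∫ t in c..x, ‖q t‖) ≤ 1/2 :=
        le_trans (mul_le_mul_of_nonneg_left hmono (by linarith [hcd])) hsmall
      calc ‖∫ t in c..x, ((x - t : ℝ) : ℂ) * (q t * (ext w₁ t - ext w₂ t))‖
          ≤ |∫ t in c..x, ((d - c) * dist w₁ w₂) * ‖q t‖| :=
            intervalIntegral.norm_integral_le_abs_of_norm_le hbd
              ((hq.norm.mono_set (uIcc_subset_uIcc (hmem hcc) (hmem hx))).const_mul _)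
        _ = ((d - c) * dist w₁ w₂) * ∫ t in c..x, ‖q t‖ := habs
        _ = ((d - c) * (∫ t in c..x, ‖q t‖)) * dist w₁ w₂ := by ring
        _ ≤ (1/2) * dist w₁ w₂ := mul_le_mul_of_nonneg_right h3 dist_nonneg
    calc dist ((T w₁) ⟨x, hx⟩) ((T w₂) ⟨x, hx⟩) = ‖Tfun w₁ x - Tfun w₂ x‖ := by
          rw [dist_eq_norm]; rfl
      _ ≤ (1/2) * dist w₁ w₂ := hb
  have hcontract : ContractingWith (1/2 : NNReal) T := by
    constructor
    · rw [← NNReal.coe_lt_coe]; norm_num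
    · apply LipschitzWith.of_dist_le_mul
      intro w₁ w₂
      have h := hlip w₁ w₂
      have : ((1/2 : NNReal) : ℝ) = 1/2 := by norm_num
      rw [this]
      exact h
  set w : C(Icc c d, ℂ) := ContractingWith.fixedPoint T hcontract with hwdef
  have hw : T w = w := hcontract.fixedPoint_isFixedPt
  have hfix : ∀ x (hx : x ∈ Icc c d), Tfun w x = w ⟨x, hx⟩ := by
    intro x hx
    conv_rhs => rw [← hw]
    rfl
  have hext_eq : ∀ x, x ∈ Icc c d → ext w x = Tfun w x := by
    intro x hx
    simp only [ext]
    rw [projIcc_of_mem hcd hx, ← hfix x hx]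
  set P' : ℝ → ℂ := fun x => ∫ t in c..x, q t * ext w t with hP'def
  set vd : ℝ → ℂ := fun x => b + P' (max c (min x d)) with hvddef
  set v : ℝ → ℂ := fun x =>
    if x < c then a + ((x - c : ℝ) : ℂ) * b
    else if x ≤ d then Tfun w x
    else Tfun w d + ((x - d : ℝ) : ℂ) * vd d with hvdef
  have hP'c : P' c = 0 := intervalIntegral.integral_same
  have hTfunc : Tfun w c = a := by simp [Tfun]
  have hvc : v c = a := by
    simp only [hvdef, if_neg (lt_irrefl c), if_pos hcd]
    exact hTfunc
  have hvdc : vd c = b := by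
    simp only [hvddef, min_eq_left hcd, max_self, hP'c, add_zero]
  have hclamp : ∀ x ∈ Icc c d, max c (min x d) = x := by
    intro x hx
    rw [min_eq_left hx.2, max_eq_right hx.1]
  have hveq : ∀ x ∈ Icc c d, v x = ext w x := by
    intro x hx
    simp only [hvdef, if_neg (not_lt.2 hx.1), if_pos hx.2]
    exact (hext_eq x hx).symm
  have hvdd : vd d = b + P' d := by
    simp only [hvddef, min_self, max_eq_right hcd]
  have hinteq : ∀ x ∈ Icc c d, vd x = b + ∫ t in c..x, q t * v t := by
    intro x hx
    have : (∫ t in c..x, q t * v t) = ∫ t in c..x, q t * ext w t := by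
      apply intervalIntegral.integral_congr
      intro t ht
      rw [uIcc_of_le hx.1] at ht
      show q t * v t = q t * ext w t
      rw [hveq t ⟨ht.1, ht.2.trans hx.2⟩]
    rw [this]
    simp only [hvddef, hclamp x hx]
    rfl
  have hTd : Tfun w d = v d := by
    simp only [hvdef, if_neg (not_lt.2 hcd), if_pos le_rfl]
  have hderiv : ∀ x, HasDerivAt v (vd x) x := by
    intro x
    rcases lt_trichotomy x c with h | h | h
    · have hev : v =ᶠ[𝓝 x] fun y => a + ((y - c : ℝ) : ℂ) * b := by
        filter_upwards [Iio_mem_nhds h] with y hy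
        simp only [hvdef, if_pos (show y < c from hy)]
      have hd := (affine_hasDerivAt a b c x).congr_of_eventuallyEq hev
      have : vd x = b := by
        simp only [hvddef, min_eq_left (le_of_lt (lt_of_lt_of_le h hcd)),
          max_eq_left (le_of_lt h), hP'c, add_zero]
      rwa [this]
    · subst h
      have hleft : HasDerivWithinAt v b (Iic x) x := by
        apply (affine_hasDerivAt a b x x).hasDerivWithinAt.congr
        · intro y hy
          rcases lt_or_eq_of_le (show y ≤ x from hy) with h' | h'
          · simp only [hvdef, if_pos h']
          · subst h'; rw [hvc]; simp
        · rw [hvc]; simp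
      have hIccmem : Icc x d ∈ 𝓝[Ici x] x := by
        rw [← nhdsWithin_Icc_eq_nhdsGE hlt]
        exact self_mem_nhdsWithin
      have h4 : HasDerivWithinAt (Tfun w) (b + P' x) (Ici x) x :=
        (Tderiv w x hcc).mono_of_mem_nhdsWithin hIccmem
      have h5 : v =ᶠ[𝓝[Ici x] x] Tfun w := by
        filter_upwards [hIccmem] with y hy
        simp only [hvdef, if_neg (not_lt.2 hy.1), if_pos hy.2]
      have h6 : HasDerivWithinAt v (b + P' x) (Ici x) x :=
        h4.congr_of_eventuallyEq h5 (by rw [hvc, hTfunc])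
      rw [hP'c, add_zero] at h6
      have h7 := hleft.union h6
      rw [Iic_union_Ici] at h7
      rw [hvdc]
      exact hasDerivWithinAt_univ.1 h7
    · rcases lt_trichotomy x d with h2 | h2 | h2
      · have hev : v =ᶠ[𝓝 x] Tfun w := by
          filter_upwards [Ioo_mem_nhds h h2] with y hy
          simp only [hvdef, if_neg (not_lt.2 hy.1.le), if_pos hy.2.le]
        have hd := ((Tderiv w x ⟨h.le, h2.le⟩).hasDerivAt
          (Icc_mem_nhds h h2)).congr_of_eventuallyEq hev
        have : vd x = b + P' x := by
          simp only [hvddef, hclamp x ⟨h.le, h2.le⟩]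
        rwa [this]
      · subst h2
        have hIccmem : Icc c x ∈ 𝓝[Iic x] x := by
          rw [← nhdsWithin_Icc_eq_nhdsLE hlt]
          exact self_mem_nhdsWithin
        have h4 : HasDerivWithinAt (Tfun w) (b + P' x) (Iic x) x :=
          (Tderiv w x hdd).mono_of_mem_nhdsWithin hIccmem
        have h5 : v =ᶠ[𝓝[Iic x] x] Tfun w := by
          filter_upwards [hIccmem] with y hy
          simp only [hvdef, if_neg (not_lt.2 hy.1), if_pos hy.2]
        have h6 : HasDerivWithinAt v (b + P' x) (Iic x) x :=
          h4.congr_of_eventuallyEq h5 hTd.symm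
        rw [← hvdd] at h6
        have hright : HasDerivWithinAt v (vd x) (Ici x) x := by
          apply (affine_hasDerivAt (Tfun w x) (vd x) x x).hasDerivWithinAt.congr
          · intro y hy
            rcases lt_or_eq_of_le (show x ≤ y from hy) with h' | h'
            · simp only [hvdef, if_neg (not_lt.2 (hcd.trans h'.le)), if_neg (not_le.2 h')]
            · subst h'; rw [← hTd]; simp
          · rw [← hTd]; simp
        have h7 := h6.union hright
        rw [Iic_union_Ici] at h7
        exact hasDerivWithinAt_univ.1 h7
      · have hev : v =ᶠ[𝓝 x] fun y => Tfun w d + ((y - d : ℝ) : ℂ) * vd d := by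
          filter_upwards [Ioi_mem_nhds h2] with y hy
          simp only [hvdef, if_neg (not_lt.2 (hcd.trans (le_of_lt hy))), if_neg (not_le.2 (mem_Ioi.1 hy))]
        have hd := (affine_hasDerivAt (Tfun w d) (vd d) d x).congr_of_eventuallyEq hev
        have : vd x = vd d := by
          simp only [hvddef, min_eq_right h2.le, min_self]
        rwa [this]
  exact ⟨v, vd, hvc, hvdc, hderiv, hinteq⟩

lemma extend_solve {q : ℝ → ℂ} {R s₀ s : ℝ} (h0 : 0 ≤ s₀) (h01 : s₀ ≤ s) (hsR : s ≤ R)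
    (hq : IntervalIntegrable q volume 0 R)
    (hsmall : (s - s₀) * ∫ t in s₀..s, ‖q t‖ ≤ 1/2)
    {u u' : ℝ → ℂ}
    (hu : ∀ x, HasDerivAt u (u' x) x)
    (heq : ∀ x ∈ Icc (0:ℝ) s₀, u' x = u' 0 + ∫ t in (0:ℝ)..x, q t * u t) :
    ∃ U U' : ℝ → ℂ, U 0 = u 0 ∧ U' 0 = u' 0 ∧ (∀ x, HasDerivAt U (U' x) x) ∧
      ∀ x ∈ Icc (0:ℝ) s, U' x = U' 0 + ∫ t in (0:ℝ)..x, q t * U t := by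
  have hR0 : (0:ℝ) ≤ R := le_trans (le_trans h0 h01) hsR
  have hmemR : ∀ {e : ℝ}, 0 ≤ e → e ≤ R → e ∈ uIcc 0 R := by
    intro e he1 he2; rw [uIcc_of_le hR0]; exact ⟨he1, he2⟩
  have hqsub : ∀ {e f : ℝ}, 0 ≤ e → e ≤ R → 0 ≤ f → f ≤ R →
      IntervalIntegrable q volume e f := by
    intro e f he1 he2 hf1 hf2
    exact hq.mono_set (uIcc_subset_uIcc (hmemR he1 he2) (hmemR hf1 hf2))
  obtain ⟨v, v', hvc, hvdc, hvderiv, hveq⟩ :=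
    local_solve h01 (hqsub h0 (h01.trans hsR) (h0.trans h01) hsR) hsmall (u s₀) (u' s₀)
  set U : ℝ → ℂ := fun x => if x ≤ s₀ then u x else v x with hUdef
  set U' : ℝ → ℂ := fun x => if x ≤ s₀ then u' x else v' x with hU'def
  have hU0 : U 0 = u 0 := by simp only [hUdef, if_pos h0]
  have hU'0 : U' 0 = u' 0 := by simp only [hU'def, if_pos h0]
  have hUicc : ∀ x, x ≤ s₀ → U x = u x := fun x hx => by simp only [hUdef, if_pos hx]
  have hUv : ∀ x, s₀ ≤ x → U x = v x := by
    intro x hx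
    rcases lt_or_eq_of_le hx with h' | h'
    · simp only [hUdef, if_neg (not_le.2 h')]
    · subst h'; simp only [hUdef, if_pos le_rfl, hvc]
  have hUderiv : ∀ x, HasDerivAt U (U' x) x := by
    intro x
    rcases lt_trichotomy x s₀ with h | h | h
    · have hev : U =ᶠ[𝓝 x] u := by
        filter_upwards [Iio_mem_nhds h] with y hy
        exact hUicc y (le_of_lt hy)
      have hd := (hu x).congr_of_eventuallyEq hev
      rwa [show U' x = u' x from by simp only [hU'def, if_pos h.le]]
    · subst h
      have hleft : HasDerivWithinAt U (u' x) (Iic x) x :=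
        (hu x).hasDerivWithinAt.congr (fun y hy => hUicc y hy) (hUicc x le_rfl)
      have hright : HasDerivWithinAt U (u' x) (Ici x) x := by
        have := (hvderiv x).hasDerivWithinAt (s := Ici x)
        rw [hvdc] at this
        exact this.congr (fun y hy => hUv y hy) (hUv x le_rfl)
      have h7 := hleft.union hright
      rw [Iic_union_Ici] at h7
      rw [show U' x = u' x from by simp only [hU'def, if_pos le_rfl]]
      exact hasDerivWithinAt_univ.1 h7
    · have hev : U =ᶠ[𝓝 x] v := by
        filter_upwards [Ioi_mem_nhds h] with y hy
        exact hUv y (le_of_lt hy)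
      have hd := (hvderiv x).congr_of_eventuallyEq hev
      rwa [show U' x = v' x from by simp only [hU'def, if_neg (not_le.2 h)]]
  have hUcont : Continuous U := by
    apply continuous_iff_continuousAt.2
    intro x
    exact (hUderiv x).continuousAt
  refine ⟨U, U', hU0, hU'0, hUderiv, ?_⟩
  intro x hx
  have hint : ∀ {e f : ℝ}, 0 ≤ e → e ≤ R → 0 ≤ f → f ≤ R →
      IntervalIntegrable (fun t => q t * U t) volume e f := by
    intro e f he1 he2 hf1 hf2
    exact (hqsub he1 he2 hf1 hf2).mul_continuousOn hUcont.continuousOn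
  rcases le_or_gt x s₀ with h | h
  · have h1 : U' x = u' x := by simp only [hU'def, if_pos h]
    rw [h1, heq x ⟨hx.1, h⟩, hU'0]
    congr 1
    apply intervalIntegral.integral_congr
    intro t ht
    rw [uIcc_of_le hx.1] at ht
    show q t * u t = q t * U t
    rw [hUicc t (ht.2.trans h)]
  · have h1 : U' x = v' x := by simp only [hU'def, if_neg (not_le.2 h)]
    have h2 : v' x = u' s₀ + ∫ t in s₀..x, q t * v t := hveq x ⟨h.le, hx.2⟩
    have h3 : (∫ t in s₀..x, q t * v t) = ∫ t in s₀..x, q t * U t := by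
      apply intervalIntegral.integral_congr
      intro t ht
      rw [uIcc_of_le h.le] at ht
      show q t * v t = q t * U t
      rw [hUv t ht.1]
    have h4 : u' s₀ = U' 0 + ∫ t in (0:ℝ)..s₀, q t * U t := by
      rw [heq s₀ ⟨h0, le_rfl⟩, hU'0]
      congr 1
      apply intervalIntegral.integral_congr
      intro t ht
      rw [uIcc_of_le h0] at ht
      show q t * u t = q t * U t
      rw [hUicc t ht.2]
    have h5 := intervalIntegral.integral_add_adjacent_intervals
      (hint le_rfl hR0 h0 (h01.trans hsR)) (hint h0 (h01.trans hsR) hx.1 (hx.2.trans hsR))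
    rw [h1, h2, h3, h4]
    rw [← h5]
    ring

lemma global_solve {q : ℝ → ℂ} {R : ℝ} (hR : 0 ≤ R)
    (hq : IntervalIntegrable q volume 0 R) (a b : ℂ) :
    ∃ u u' : ℝ → ℂ, u 0 = a ∧ u' 0 = b ∧ (∀ x, HasDerivAt u (u' x) x) ∧
      ∀ x ∈ Icc (0:ℝ) R, u' x = u' 0 + ∫ t in (0:ℝ)..x, q t * u t := by
  set G : ℝ → ℝ := fun s => ∫ t in (0:ℝ)..s, ‖q t‖ with hGdef
  set ε : ℝ := 1/(2*(R+1)) with hεdef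
  have hε : 0 < ε := by positivity
  have hbase : ∀ x, HasDerivAt (fun y : ℝ => a + ((y - 0 : ℝ) : ℂ) * b) b x :=
    fun x => affine_hasDerivAt a b 0 x
  have main : ∀ n : ℕ, ∀ s, 0 ≤ s → s ≤ R → G s ≤ n * ε →
      ∃ u u' : ℝ → ℂ, u 0 = a ∧ u' 0 = b ∧ (∀ x, HasDerivAt u (u' x) x) ∧
        ∀ x ∈ Icc (0:ℝ) s, u' x = u' 0 + ∫ t in (0:ℝ)..x, q t * u t := by
    intro n
    induction n with
    | zero =>
      intro s hs0 hsR hGs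
      have hGnn : 0 ≤ G s :=
        intervalIntegral.integral_nonneg hs0 (fun t _ => norm_nonneg _)
      have hG0 : G s = 0 := le_antisymm (by simpa using hGs) hGnn
      have hsmall : (s - 0) * ∫ t in (0:ℝ)..s, ‖q t‖ ≤ 1/2 := by
        rw [show (∫ t in (0:ℝ)..s, ‖q t‖) = G s from rfl, hG0]
        norm_num
      obtain ⟨U, U', hU0, hU'0, hUd, hUe⟩ := extend_solve le_rfl hs0 hsR hq hsmall
        (u := fun y : ℝ => a + ((y - 0 : ℝ) : ℂ) * b) (u' := fun _ => b) hbase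
        (by intro x hx
            have : x = 0 := le_antisymm hx.2 hx.1
            subst this
            simp)
      exact ⟨U, U', by rw [hU0]; simp, by rw [hU'0], hUd, hUe⟩
    | succ n ih =>
      intro s hs0 hsR hGs
      rcases le_or_gt (G s) (n * ε) with hle | hgt
      · exact ih s hs0 hsR hle
      · have hnε : (0:ℝ) ≤ n * ε := by positivity
        have hGcont : ContinuousOn G (Icc 0 s) := by
          have h1 : ContinuousOn (fun y => ∫ t in (0:ℝ)..y, ‖q t‖) (uIcc 0 s) :=
            intervalIntegral.continuousOn_primitive_interval'
              (hq.norm.mono_set (uIcc_subset_uIcc (by rw [uIcc_of_le hR]; exact ⟨le_rfl, hR⟩)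
                (by rw [uIcc_of_le hR]; exact ⟨hs0, hsR⟩)))
              (by rw [uIcc_of_le hs0]; exact ⟨le_rfl, hs0⟩)
          rwa [uIcc_of_le hs0] at h1
        have hG0 : G 0 = 0 := intervalIntegral.integral_same
        obtain ⟨s₀, hs₀mem, hGs₀⟩ : ∃ s₀ ∈ Icc 0 s, G s₀ = n * ε := by
          have := intermediate_value_Icc hs0 hGcont
          have hmem : n * ε ∈ Icc (G 0) (G s) := by
            rw [hG0]; exact ⟨hnε, hgt.le⟩
          exact this hmem
        obtain ⟨u, u', hu0, hu'0, hud, hue⟩ :=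
          ih s₀ hs₀mem.1 (hs₀mem.2.trans hsR) (le_of_eq hGs₀)
        have hqi : ∀ {e f : ℝ}, 0 ≤ e → e ≤ R → 0 ≤ f → f ≤ R →
            IntervalIntegrable (fun t => ‖q t‖) volume e f := by
          intro e f he1 he2 hf1 hf2
          exact hq.norm.mono_set (uIcc_subset_uIcc
            (by rw [uIcc_of_le hR]; exact ⟨he1, he2⟩) (by rw [uIcc_of_le hR]; exact ⟨hf1, hf2⟩))
        have hsplit : G s₀ + (∫ t in s₀..s, ‖q t‖) = G s :=
          intervalIntegral.integral_add_adjacent_intervals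
            (hqi le_rfl hR hs₀mem.1 (hs₀mem.2.trans hsR))
            (hqi hs₀mem.1 (hs₀mem.2.trans hsR) hs0 hsR)
        have hIle : (∫ t in s₀..s, ‖q t‖) ≤ ε := by
          have : G s ≤ (n+1) * ε := by push_cast at hGs ⊢; linarith
          linarith [hsplit, hGs₀]
        have hInn : (0:ℝ) ≤ ∫ t in s₀..s, ‖q t‖ :=
          intervalIntegral.integral_nonneg hs₀mem.2 (fun t _ => norm_nonneg _)
        have hsmall : (s - s₀) * ∫ t in s₀..s, ‖q t‖ ≤ 1/2 := by
          have h1 : (s - s₀) * (∫ t in s₀..s, ‖q t‖) ≤ R * ε := by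
            apply mul_le_mul _ hIle hInn hR
            have := hs₀mem.1; linarith
          have h2 : R * ε ≤ 1/2 := by
            rw [hεdef, mul_one_div, div_le_div_iff₀ (by linarith) (by norm_num)]
            nlinarith
          linarith
        obtain ⟨U, U', h1, h2, h3, h4⟩ := extend_solve hs₀mem.1 hs₀mem.2 hsR hq hsmall hud
          (by intro x hx; rw [hue x hx])
        exact ⟨U, U', by rw [h1, hu0], by rw [h2, hu'0], h3, h4⟩
  obtain ⟨n, hn⟩ := exists_nat_ge (G R / ε)
  exact main n R hR le_rfl ((div_le_iff₀ hε).1 hn)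

end AuxA

section Aux2

open intervalIntegral Topology

variable {R : ℝ} {V : ℝ → ℂ} {z : ℂ}

lemma hq_of_hV (hR : 0 < R) (hV : IntegrableOn V (Ioo 0 R)) :
    IntervalIntegrable (fun t => V t - z) volume 0 R := by
  have h1 : IntegrableOn V (Ioc 0 R) := by
    apply hV.congr_set_ae
    exact (Ioo_ae_eq_Ioc (μ := volume) (a := (0:ℝ)) (b := R)).symm
  have h2 : IntervalIntegrable V volume 0 R :=
    (intervalIntegrable_iff_integrableOn_Ioc_of_le hR.le).2 h1
  exact h2.sub (intervalIntegrable_const)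

lemma IsSol.contOn {u u' : ℝ → ℂ} (h : IsSol R V z u u') : ContinuousOn u (Icc 0 R) :=
  fun x hx => ((h.1 x hx).continuousAt).continuousWithinAt

lemma sol_int (hR : 0 < R) (hV : IntegrableOn V (Ioo 0 R)) {u : ℝ → ℂ}
    (hu : ContinuousOn u (Icc 0 R)) {e f : ℝ} (he : e ∈ Icc (0:ℝ) R) (hf : f ∈ Icc (0:ℝ) R) :
    IntervalIntegrable (fun t => (V t - z) * u t) volume e f := by
  have hmem : ∀ {x : ℝ}, x ∈ Icc (0:ℝ) R → x ∈ uIcc (0:ℝ) R := by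
    intro x hx; rwa [uIcc_of_le hR.le]
  have hsub : uIcc e f ⊆ Icc (0:ℝ) R := by
    rw [← uIcc_of_le hR.le]
    exact uIcc_subset_uIcc (hmem he) (hmem hf)
  have hsub' : uIcc e f ⊆ uIcc (0:ℝ) R := by rwa [uIcc_of_le hR.le]
  exact ((hq_of_hV (z := z) hR hV).mono_set hsub').mul_continuousOn (hu.mono hsub)

lemma IsSol.combo (hR : 0 < R) (hV : IntegrableOn V (Ioo 0 R)) (α β : ℂ)
    {u u' v v' : ℝ → ℂ} (hu : IsSol R V z u u') (hv : IsSol R V z v v') :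
    IsSol R V z (fun x => α * u x + β * v x) (fun x => α * u' x + β * v' x) := by
  constructor
  · intro x hx
    exact ((hu.1 x hx).const_mul α).add ((hv.1 x hx).const_mul β)
  · intro x hx
    have h0 : (0:ℝ) ∈ Icc (0:ℝ) R := ⟨le_rfl, hR.le⟩
    have hxm : x ∈ Icc (0:ℝ) R := hx
    have iu := sol_int (z := z) hR hV hu.contOn h0 hxm
    have iv := sol_int (z := z) hR hV hv.contOn h0 hxm
    have e1 := hu.2 x hx
    have e2 := hv.2 x hx
    simp only [Pi.zero_apply, sub_zero] at e1 e2 ⊢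
    have heqf : (fun t => (V t - z) * (α * u t + β * v t))
        = fun t => α * ((V t - z) * u t) + β * ((V t - z) * v t) := by
      funext t; ring
    rw [heqf, intervalIntegral.integral_add (iu.const_mul α) (iv.const_mul β),
      intervalIntegral.integral_const_mul, intervalIntegral.integral_const_mul, e1, e2]
    ring

lemma zero_trace (hR : 0 < R) {θ0 θR : ℂ} (hz : ¬ IsEigenvalue R V θ0 θR z)
    {u u' : ℝ → ℂ} (hsol : IsSol R V z u u') (htr : bTrace R θ0 θR u u' = 0) :
    u 0 = 0 ∧ u' 0 = 0 ∧ u R = 0 ∧ u' R = 0 := by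
  have hu0 : ∀ x ∈ Icc (0:ℝ) R, u x = 0 := by
    by_contra hcon
    push_neg at hcon
    obtain ⟨x, hx, hne⟩ := hcon
    exact hz ⟨u, u', hsol, htr, x, hx, hne⟩
  have hu'const : ∀ x ∈ Icc (0:ℝ) R, u' x = u' 0 := by
    intro x hx
    have := hsol.2 x hx
    have hzero : (∫ t in (0:ℝ)..x, ((V t - z) * u t - (0:ℝ → ℂ) t)) = 0 := by
      rw [show (0:ℂ) = ∫ t in (0:ℝ)..x, (0:ℂ) from by simp]
      apply intervalIntegral.integral_congr
      intro t ht
      rw [uIcc_of_le hx.1] at ht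
      simp [hu0 t ⟨ht.1, ht.2.trans hx.2⟩]
    rw [hzero, add_zero] at this
    exact this
  have hmid : u' (R/2) = 0 := by
    have hxm : R/2 ∈ Icc (0:ℝ) R := ⟨by linarith, by linarith⟩
    have hd := hsol.1 (R/2) hxm
    have hev : u =ᶠ[𝓝 (R/2)] fun _ => (0:ℂ) := by
      filter_upwards [Ioo_mem_nhds (by linarith : (0:ℝ) < R/2) (by linarith : R/2 < R)] with y hy
      exact hu0 y ⟨hy.1.le, hy.2.le⟩
    have hd0 : HasDerivAt (fun _ : ℝ => (0:ℂ)) (u' (R/2)) (R/2) := by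
      exact hd.congr_of_eventuallyEq hev.symm
    have := hd0.unique (hasDerivAt_const _ _)
    exact this
  have h0R : (0:ℝ) ∈ Icc (0:ℝ) R := ⟨le_rfl, hR.le⟩
  have hRR : R ∈ Icc (0:ℝ) R := ⟨hR.le, le_rfl⟩
  have h1 : u' 0 = 0 := by
    rw [← hu'const (R/2) ⟨by linarith, by linarith⟩]
    exact hmid
  exact ⟨hu0 0 h0R, h1, hu0 R hRR, by rw [hu'const R hRR]; exact h1⟩

lemma bTrace_combo (α β : ℂ) (θa θb : ℂ) (u u' v v' : ℝ → ℂ) :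
    bTrace R θa θb (fun x => α * u x + β * v x) (fun x => α * u' x + β * v' x)
      = fun i => α * bTrace R θa θb u u' i + β * bTrace R θa θb v v' i := by
  funext i
  fin_cases i <;>
    simp [bTrace, Matrix.cons_val_zero, Matrix.cons_val_one, Matrix.head_cons] <;> ring

lemma trace_unique (hR : 0 < R) (hV : IntegrableOn V (Ioo 0 R)) {θ0 θR : ℂ}
    (hz : ¬ IsEigenvalue R V θ0 θR z) {u u' v v' : ℝ → ℂ}
    (hu : IsSol R V z u u') (hv : IsSol R V z v v')
    (h : bTrace R θ0 θR u u' = bTrace R θ0 θR v v') (θa θb : ℂ) :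
    bTrace R θa θb u u' = bTrace R θa θb v v' := by
  have hw : IsSol R V z (fun x => 1 * u x + (-1) * v x) (fun x => 1 * u' x + (-1) * v' x) :=
    hu.combo hR hV 1 (-1) hv
  have hwtr : bTrace R θ0 θR (fun x => 1 * u x + (-1) * v x)
      (fun x => 1 * u' x + (-1) * v' x) = 0 := by
    rw [bTrace_combo]
    funext i
    rw [h]
    simp
  obtain ⟨e0, e1, e2, e3⟩ := zero_trace hR hz hw hwtr
  have f0 : u 0 = v 0 := by linear_combination e0
  have f1 : u' 0 = v' 0 := by linear_combination e1
  have f2 : u R = v R := by linear_combination e2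
  have f3 : u' R = v' R := by linear_combination e3
  funext i
  fin_cases i <;> simp only [bTrace, Matrix.cons_val_zero, Matrix.cons_val_one,
    Matrix.head_cons] <;> rw [f0, f1, f2, f3]

lemma lambdaMap_eq (hR : 0 < R) (hV : IntegrableOn V (Ioo 0 R)) {θ0 θR : ℂ}
    (hz : ¬ IsEigenvalue R V θ0 θR z) {u u' : ℝ → ℂ} {c : Fin 2 → ℂ}
    (hu : IsSol R V z u u') (htr : bTrace R θ0 θR u u' = c) (θa θb : ℂ) :
    lambdaMap R V θ0 θR θa θb z c = bTrace R θa θb u u' := by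
  have hex : ∃ p : (ℝ → ℂ) × (ℝ → ℂ), IsSol R V z p.1 p.2 ∧ bTrace R θ0 θR p.1 p.2 = c :=
    ⟨(u, u'), hu, htr⟩
  rw [lambdaMap, dif_pos hex]
  exact trace_unique hR hV hz hex.choose_spec.1 hu (hex.choose_spec.2.trans htr.symm) θa θb

lemma exists_sol_ivp (hR : 0 < R) (hV : IntegrableOn V (Ioo 0 R)) (a b : ℂ) :
    ∃ u u' : ℝ → ℂ, IsSol R V z u u' ∧ u 0 = a ∧ u' 0 = b := by
  obtain ⟨u, u', h0, h1, h2, h3⟩ := global_solve hR.le (hq_of_hV (z := z) hR hV) a b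
  refine ⟨u, u', ⟨fun x hx => h2 x, ?_⟩, h0, h1⟩
  intro x hx
  have := h3 x hx
  simpa using this

lemma exists_sol_trace (hR : 0 < R) (hV : IntegrableOn V (Ioo 0 R)) {θ0 θR : ℂ}
    (hz : ¬ IsEigenvalue R V θ0 θR z) (c : Fin 2 → ℂ) :
    ∃ u u' : ℝ → ℂ, IsSol R V z u u' ∧ bTrace R θ0 θR u u' = c := by
  obtain ⟨p, p', hp, hp0, hp0'⟩ := exists_sol_ivp (z := z) hR hV 1 0
  obtain ⟨r, r', hr, hr0, hr0'⟩ := exists_sol_ivp (z := z) hR hV 0 1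
  set M : Matrix (Fin 2) (Fin 2) ℂ := Matrix.of fun i k =>
    ![bTrace R θ0 θR p p', bTrace R θ0 θR r r'] k i with hMdef
  have hcombo : ∀ x : Fin 2 → ℂ,
      bTrace R θ0 θR (fun t => x 0 * p t + x 1 * r t) (fun t => x 0 * p' t + x 1 * r' t)
        = M.mulVec x := by
    intro x
    funext i
    rw [bTrace_combo]
    simp only [Matrix.mulVec, dotProduct, Fin.sum_univ_two, hMdef, Matrix.of_apply,
      Matrix.cons_val_zero, Matrix.cons_val_one, Matrix.head_cons]
    ring
  have hinj : Function.Injective M.mulVecLin := by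
    rw [← LinearMap.ker_eq_bot, LinearMap.ker_eq_bot']
    intro x hx
    have hx' : M.mulVec x = 0 := hx
    have hsolw : IsSol R V z (fun t => x 0 * p t + x 1 * r t)
        (fun t => x 0 * p' t + x 1 * r' t) := hp.combo hR hV (x 0) (x 1) hr
    have htrw : bTrace R θ0 θR (fun t => x 0 * p t + x 1 * r t)
        (fun t => x 0 * p' t + x 1 * r' t) = 0 := by rw [hcombo x, hx']
    obtain ⟨e0, e1, _, _⟩ := zero_trace hR hz hsolw htrw
    rw [hp0, hr0] at e0
    rw [hp0', hr0'] at e1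
    funext i
    fin_cases i
    · simpa using e0
    · simpa using e1
  have hsurj : Function.Surjective M.mulVecLin :=
    LinearMap.injective_iff_surjective.1 hinj
  obtain ⟨x, hx⟩ := hsurj c
  refine ⟨fun t => x 0 * p t + x 1 * r t, fun t => x 0 * p' t + x 1 * r' t,
    hp.combo hR hV (x 0) (x 1) hr, ?_⟩
  rw [hcombo x]
  exact hx

end Aux2

/-- For `θ₀, θ_R, θ₀', θ_R', θ₀'', θ_R'' ∈ S_{2π}` and
`z ∈ ℂ \ (σ(H_{θ₀,θ_R}) ∪ σ(H_{θ₀',θ_R'}))`, the boundary data maps compose: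
`Λ_{θ₀',θ_R'}^{θ₀'',θ_R''}(z) · Λ_{θ₀,θ_R}^{θ₀',θ_R'}(z) = Λ_{θ₀,θ_R}^{θ₀'',θ_R''}(z)`. -/
theorem lambda_composition
    (R : ℝ) (hR : 0 < R) (V : ℝ → ℂ) (hV : IntegrableOn V (Ioo 0 R))
    (θ0 θR θ0' θR' θ0'' θR'' : ℂ)
    (hθ0 : θ0 ∈ S2pi) (hθR : θR ∈ S2pi) (hθ0' : θ0' ∈ S2pi) (hθR' : θR' ∈ S2pi)
    (hθ0'' : θ0'' ∈ S2pi) (hθR'' : θR'' ∈ S2pi)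
    (z : ℂ) (hz : ¬ IsEigenvalue R V θ0 θR z) (hz' : ¬ IsEigenvalue R V θ0' θR' z) :
    lambdaMat R V θ0' θR' θ0'' θR'' z * lambdaMat R V θ0 θR θ0' θR' z =
      lambdaMat R V θ0 θR θ0'' θR'' z := by
  ext i j
  rw [Matrix.mul_apply, Fin.sum_univ_two]
  simp only [lambdaMat, Matrix.of_apply]
  obtain ⟨u, u', hu, hutr⟩ := exists_sol_trace (z := z) hR hV hz (Pi.single j 1)
  obtain ⟨v0, v0', hv0, hv0tr⟩ := exists_sol_trace (z := z) hR hV hz' (Pi.single 0 1)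
  obtain ⟨v1, v1', hv1, hv1tr⟩ := exists_sol_trace (z := z) hR hV hz' (Pi.single 1 1)
  set c' : Fin 2 → ℂ := bTrace R θ0' θR' u u' with hc'def
  have hB : lambdaMap R V θ0 θR θ0' θR' z (Pi.single j 1) = c' :=
    lambdaMap_eq hR hV hz hu hutr θ0' θR'
  have hRHS : lambdaMap R V θ0 θR θ0'' θR'' z (Pi.single j 1) = bTrace R θ0'' θR'' u u' :=
    lambdaMap_eq hR hV hz hu hutr θ0'' θR''
  have hA0 : lambdaMap R V θ0' θR' θ0'' θR'' z (Pi.single 0 1) = bTrace R θ0'' θR'' v0 v0' :=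
    lambdaMap_eq hR hV hz' hv0 hv0tr θ0'' θR''
  have hA1 : lambdaMap R V θ0' θR' θ0'' θR'' z (Pi.single 1 1) = bTrace R θ0'' θR'' v1 v1' :=
    lambdaMap_eq hR hV hz' hv1 hv1tr θ0'' θR''
  have hw : IsSol R V z (fun t => c' 0 * v0 t + c' 1 * v1 t)
      (fun t => c' 0 * v0' t + c' 1 * v1' t) :=
    hv0.combo hR hV (c' 0) (c' 1) hv1
  have hwtr : bTrace R θ0' θR' (fun t => c' 0 * v0 t + c' 1 * v1 t)
      (fun t => c' 0 * v0' t + c' 1 * v1' t) = c' := by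
    rw [bTrace_combo (c' 0) (c' 1) θ0' θR' v0 v0' v1 v1', hv0tr, hv1tr]
    funext k
    fin_cases k <;> simp
  have huw := trace_unique hR hV hz' hw hu (hwtr.trans hc'def) θ0'' θR''
  rw [bTrace_combo] at huw
  have hkey := congrFun huw i
  rw [hRHS, hB, hA0, hA1]
  linear_combination hkey
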